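/- The polynomial q(a) = 2a¹⁰ − (2+√3)a⁹ − (2√3−2)a⁸ − (2√3−2)a⁷ − (12√3+2)a⁶ − (13√3−4)a⁵ − (12√3+2)a⁴ − (2√3−2)a³ − (2√3−2)a² − (2+√3)a + 2 has exactly one zero in the interval [1,∞), and this zero lies in (46/16, 47/16). -/

import Mathlib

open Real

noncomputable def Qf : ℝ → ℝ := fun a =>
  2*a^10 - (2 + Real.sqrt 3)*a^9 - (2*Real.sqrt 3 - 2)*a^8 - (2*Real.sqrt 3 - 2)*a^7
    - (12*Real.sqrt 3 + 2)*a^6 - (13*Real.sqrt 3 - 4)*a^5 - (12*Real.sqrt 3 + 2)*a^4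
    - (2*Real.sqrt 3 - 2)*a^3 - (2*Real.sqrt 3 - 2)*a^2 - (2 + Real.sqrt 3)*a + 2

lemma s_lo : (433:ℝ)/250 < Real.sqrt 3 := by
  nlinarith [Real.sq_sqrt (by norm_num : (0:ℝ) ≤ 3), Real.sqrt_nonneg 3]

lemma s_hi : Real.sqrt 3 < 17321/10000 := by
  nlinarith [Real.sq_sqrt (by norm_num : (0:ℝ) ≤ 3), Real.sqrt_nonneg 3]

lemma lemA (u : ℝ) (h1 : 1 ≤ u) (h2 : u ≤ 23/8) : Qf u < 0 := by
  have hA : (0:ℝ) ≤ u - 1 := by linarith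
  have hB : (0:ℝ) ≤ 23/8 - u := by linarith
  have hu : (0:ℝ) < u := by linarith
  have hs := s_lo
  have hP : (0:ℝ) < u^9 + 2*u^8 + 2*u^7 + 12*u^6 + 13*u^5 + 12*u^4 + 2*u^3 + 2*u^2 + u := by linarith [pow_pos hu 9, pow_pos hu 8, pow_pos hu 7, pow_pos hu 6, pow_pos hu 5, pow_pos hu 4, pow_pos hu 3, pow_pos hu 2]
  have hid : ((2)*u^10 + (-933/250)*u^9 + (-183/125)*u^8 + (-183/125)*u^7 + (-2848/125)*u^6 + (-4629/250)*u^5 + (-2848/125)*u^4 + (-183/125)*u^3 + (-183/125)*u^2 + (-933/250)*u + (2))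
      + ((1094679789568/8009033203125)*(23/8-u)^10 + (4241884184576/1601806640625)*(u-1)*(23/8-u)^9 + (12187372355584/533935546875)*(u-1)^2*(23/8-u)^8 + (61515187093504/533935546875)*(u-1)^3*(23/8-u)^7 + (66976808566784/177978515625)*(u-1)^4*(23/8-u)^6 + (2209417345318912/2669677734375)*(u-1)^5*(23/8-u)^5 + (218935526764544/177978515625)*(u-1)^6*(23/8-u)^4 + (638955897332224/533935546875)*(u-1)^7*(23/8-u)^3 + (370752361720864/533935546875)*(u-1)^8*(23/8-u)^2 + (294878392434236/1601806640625)*(u-1)^9*(23/8-u) + (3655838184418/8009033203125)*(u-1)^10) = 0 := by ring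
  have hq : Qf u = ((2)*u^10 + (-933/250)*u^9 + (-183/125)*u^8 + (-183/125)*u^7 + (-2848/125)*u^6 + (-4629/250)*u^5 + (-2848/125)*u^4 + (-183/125)*u^3 + (-183/125)*u^2 + (-933/250)*u + (2))
      - (Real.sqrt 3 - 433/250)*(u^9 + 2*u^8 + 2*u^7 + 12*u^6 + 13*u^5 + 12*u^4 + 2*u^3 + 2*u^2 + u) := by
    unfold Qf; ring
  have hprod : (0:ℝ) < (Real.sqrt 3 - 433/250)*(u^9 + 2*u^8 + 2*u^7 + 12*u^6 + 13*u^5 + 12*u^4 + 2*u^3 + 2*u^2 + u) :=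
    mul_pos (by linarith) hP
  have tA0 : (0:ℝ) ≤ (1094679789568/8009033203125)*(23/8-u)^10 := mul_nonneg (by norm_num) (pow_nonneg hB 10)
  have tA1 : (0:ℝ) ≤ (4241884184576/1601806640625)*(u-1)*(23/8-u)^9 := mul_nonneg (mul_nonneg (by norm_num) (hA)) (pow_nonneg hB 9)
  have tA2 : (0:ℝ) ≤ (12187372355584/533935546875)*(u-1)^2*(23/8-u)^8 := mul_nonneg (mul_nonneg (by norm_num) (pow_nonneg hA 2)) (pow_nonneg hB 8)
  have tA3 : (0:ℝ) ≤ (61515187093504/533935546875)*(u-1)^3*(23/8-u)^7 := mul_nonneg (mul_nonneg (by norm_num) (pow_nonneg hA 3)) (pow_nonneg hB 7)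
  have tA4 : (0:ℝ) ≤ (66976808566784/177978515625)*(u-1)^4*(23/8-u)^6 := mul_nonneg (mul_nonneg (by norm_num) (pow_nonneg hA 4)) (pow_nonneg hB 6)
  have tA5 : (0:ℝ) ≤ (2209417345318912/2669677734375)*(u-1)^5*(23/8-u)^5 := mul_nonneg (mul_nonneg (by norm_num) (pow_nonneg hA 5)) (pow_nonneg hB 5)
  have tA6 : (0:ℝ) ≤ (218935526764544/177978515625)*(u-1)^6*(23/8-u)^4 := mul_nonneg (mul_nonneg (by norm_num) (pow_nonneg hA 6)) (pow_nonneg hB 4)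
  have tA7 : (0:ℝ) ≤ (638955897332224/533935546875)*(u-1)^7*(23/8-u)^3 := mul_nonneg (mul_nonneg (by norm_num) (pow_nonneg hA 7)) (pow_nonneg hB 3)
  have tA8 : (0:ℝ) ≤ (370752361720864/533935546875)*(u-1)^8*(23/8-u)^2 := mul_nonneg (mul_nonneg (by norm_num) (pow_nonneg hA 8)) (pow_nonneg hB 2)
  have tA9 : (0:ℝ) ≤ (294878392434236/1601806640625)*(u-1)^9*(23/8-u) := mul_nonneg (mul_nonneg (by norm_num) (pow_nonneg hA 9)) (hB)
  have tA10 : (0:ℝ) ≤ (3655838184418/8009033203125)*(u-1)^10 := mul_nonneg (by norm_num) (pow_nonneg hA 10)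
  rw [hq]
  linarith [hid, hprod, tA0, tA1, tA2, tA3, tA4, tA5, tA6, tA7, tA8, tA9, tA10]

lemma lemB (u : ℝ) (h : 47/16 ≤ u) : 0 < Qf u := by
  have hB : (0:ℝ) ≤ u - 47/16 := by linarith
  have hu : (0:ℝ) < u := by linarith
  have hs := s_hi
  have hP : (0:ℝ) < u^9 + 2*u^8 + 2*u^7 + 12*u^6 + 13*u^5 + 12*u^4 + 2*u^3 + 2*u^2 + u := by linarith [pow_pos hu 9, pow_pos hu 8, pow_pos hu 7, pow_pos hu 6, pow_pos hu 5, pow_pos hu 4, pow_pos hu 3, pow_pos hu 2]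
  have hid : ((2)*u^10 + (-37321/10000)*u^9 + (-7321/5000)*u^8 + (-7321/5000)*u^7 + (-56963/2500)*u^6 + (-185173/10000)*u^5 + (-56963/2500)*u^4 + (-7321/5000)*u^3 + (-7321/5000)*u^2 + (-37321/10000)*u + (2))
      = (2455066092710791323/687194767360000) + (3077123487195680091/42949672960000)*(u-47/16) + (242915715954402591/1342177280000)*(u-47/16)^2 + (9075212736488103/41943040000)*(u-47/16)^3 + (811701797323513/5242880000)*(u-47/16)^4 + (23742979758669/327680000)*(u-47/16)^5 + (117347276723/5120000)*(u-47/16)^6 + (3128425043/640000)*(u-47/16)^7 + (21647039/32000)*(u-47/16)^8 + (550179/10000)*(u-47/16)^9 + (2)*(u-47/16)^10 := by ring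
  have hq : Qf u = ((2)*u^10 + (-37321/10000)*u^9 + (-7321/5000)*u^8 + (-7321/5000)*u^7 + (-56963/2500)*u^6 + (-185173/10000)*u^5 + (-56963/2500)*u^4 + (-7321/5000)*u^3 + (-7321/5000)*u^2 + (-37321/10000)*u + (2))
      + (17321/10000 - Real.sqrt 3)*(u^9 + 2*u^8 + 2*u^7 + 12*u^6 + 13*u^5 + 12*u^4 + 2*u^3 + 2*u^2 + u) := by
    unfold Qf; ring
  have hprod : (0:ℝ) < (17321/10000 - Real.sqrt 3)*(u^9 + 2*u^8 + 2*u^7 + 12*u^6 + 13*u^5 + 12*u^4 + 2*u^3 + 2*u^2 + u) :=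
    mul_pos (by linarith) hP
  have tB1 : (0:ℝ) ≤ (3077123487195680091/42949672960000)*(u-47/16) := mul_nonneg (by norm_num) hB
  have tB2 : (0:ℝ) ≤ (242915715954402591/1342177280000)*(u-47/16)^2 := mul_nonneg (by norm_num) (pow_nonneg hB 2)
  have tB3 : (0:ℝ) ≤ (9075212736488103/41943040000)*(u-47/16)^3 := mul_nonneg (by norm_num) (pow_nonneg hB 3)
  have tB4 : (0:ℝ) ≤ (811701797323513/5242880000)*(u-47/16)^4 := mul_nonneg (by norm_num) (pow_nonneg hB 4)
  have tB5 : (0:ℝ) ≤ (23742979758669/327680000)*(u-47/16)^5 := mul_nonneg (by norm_num) (pow_nonneg hB 5)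
  have tB6 : (0:ℝ) ≤ (117347276723/5120000)*(u-47/16)^6 := mul_nonneg (by norm_num) (pow_nonneg hB 6)
  have tB7 : (0:ℝ) ≤ (3128425043/640000)*(u-47/16)^7 := mul_nonneg (by norm_num) (pow_nonneg hB 7)
  have tB8 : (0:ℝ) ≤ (21647039/32000)*(u-47/16)^8 := mul_nonneg (by norm_num) (pow_nonneg hB 8)
  have tB9 : (0:ℝ) ≤ (550179/10000)*(u-47/16)^9 := mul_nonneg (by norm_num) (pow_nonneg hB 9)
  have tB10 : (0:ℝ) ≤ (2)*(u-47/16)^10 := mul_nonneg (by norm_num) (pow_nonneg hB 10)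
  rw [hq]
  linarith [hid, hprod, tB1, tB2, tB3, tB4, tB5, tB6, tB7, tB8, tB9, tB10]

lemma lemC (x : ℝ) (h1 : 46/16 < x) (h2 : x < 47/16) :
    0 < 20*x^9 - 9*(2+Real.sqrt 3)*x^8 - 8*(2*Real.sqrt 3-2)*x^7 - 7*(2*Real.sqrt 3-2)*x^6 - 6*(12*Real.sqrt 3+2)*x^5 - 5*(13*Real.sqrt 3-4)*x^4 - 4*(12*Real.sqrt 3+2)*x^3 - 3*(2*Real.sqrt 3-2)*x^2 - 2*(2*Real.sqrt 3-2)*x - (2+Real.sqrt 3) := by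
  have hA : (0:ℝ) < x - 23/8 := by linarith
  have hB : (0:ℝ) < 47/16 - x := by linarith
  have hx : (0:ℝ) < x := by linarith
  have hs := s_hi
  have hP : (0:ℝ) < 9*x^8 + 16*x^7 + 14*x^6 + 72*x^5 + 65*x^4 + 48*x^3 + 6*x^2 + 4*x + 1 := by nlinarith [pow_pos hx 8, pow_pos hx 7, pow_pos hx 6, pow_pos hx 5, pow_pos hx 4, pow_pos hx 3, pow_pos hx 2]
  have hid : ((20)*x^9 + (-335889/10000)*x^8 + (-7321/625)*x^7 + (-51247/5000)*x^6 + (-170889/1250)*x^5 + (-185173/2000)*x^4 + (-56963/625)*x^3 + (-21963/5000)*x^2 + (-7321/2500)*x + (-37321/10000))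
      = (88324057828024064/25)*(47/16-x)^9 + (20645329537185404672/625)*(x-23/8)*(47/16-x)^8 + (85761775509949566208/625)*(x-23/8)^2*(47/16-x)^7 + (207749321467298825728/625)*(x-23/8)^3*(47/16-x)^6 + (323416525569387798432/625)*(x-23/8)^4*(47/16-x)^5 + (335552668365990571104/625)*(x-23/8)^5*(47/16-x)^4 + (371244219188848720)*(x-23/8)^6*(47/16-x)^3 + (4124481807253658304/25)*(x-23/8)^7*(47/16-x)^2 + (5344489704188702091/125)*(x-23/8)^8*(47/16-x) + (3077123487195680091/625)*(x-23/8)^9 := by ring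
  have hq : (20*x^9 - 9*(2+Real.sqrt 3)*x^8 - 8*(2*Real.sqrt 3-2)*x^7 - 7*(2*Real.sqrt 3-2)*x^6 - 6*(12*Real.sqrt 3+2)*x^5 - 5*(13*Real.sqrt 3-4)*x^4 - 4*(12*Real.sqrt 3+2)*x^3 - 3*(2*Real.sqrt 3-2)*x^2 - 2*(2*Real.sqrt 3-2)*x - (2+Real.sqrt 3))
      = ((20)*x^9 + (-335889/10000)*x^8 + (-7321/625)*x^7 + (-51247/5000)*x^6 + (-170889/1250)*x^5 + (-185173/2000)*x^4 + (-56963/625)*x^3 + (-21963/5000)*x^2 + (-7321/2500)*x + (-37321/10000)) + (17321/10000 - Real.sqrt 3)*(9*x^8 + 16*x^7 + 14*x^6 + 72*x^5 + 65*x^4 + 48*x^3 + 6*x^2 + 4*x + 1) := by ring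
  have hprod : (0:ℝ) < (17321/10000 - Real.sqrt 3)*(9*x^8 + 16*x^7 + 14*x^6 + 72*x^5 + 65*x^4 + 48*x^3 + 6*x^2 + 4*x + 1) :=
    mul_pos (by linarith) hP
  have tC0 : (0:ℝ) ≤ (88324057828024064/25)*(47/16-x)^9 := mul_nonneg (by norm_num) (pow_nonneg hB.le 9)
  have tC1 : (0:ℝ) < (20645329537185404672/625)*(x-23/8)*(47/16-x)^8 := mul_pos (mul_pos (by norm_num) hA) (pow_pos hB 8)
  have tC2 : (0:ℝ) ≤ (85761775509949566208/625)*(x-23/8)^2*(47/16-x)^7 := mul_nonneg (mul_nonneg (by norm_num) (pow_nonneg hA.le 2)) (pow_nonneg hB.le 7)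
  have tC3 : (0:ℝ) ≤ (207749321467298825728/625)*(x-23/8)^3*(47/16-x)^6 := mul_nonneg (mul_nonneg (by norm_num) (pow_nonneg hA.le 3)) (pow_nonneg hB.le 6)
  have tC4 : (0:ℝ) ≤ (323416525569387798432/625)*(x-23/8)^4*(47/16-x)^5 := mul_nonneg (mul_nonneg (by norm_num) (pow_nonneg hA.le 4)) (pow_nonneg hB.le 5)
  have tC5 : (0:ℝ) ≤ (335552668365990571104/625)*(x-23/8)^5*(47/16-x)^4 := mul_nonneg (mul_nonneg (by norm_num) (pow_nonneg hA.le 5)) (pow_nonneg hB.le 4)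
  have tC6 : (0:ℝ) ≤ (371244219188848720)*(x-23/8)^6*(47/16-x)^3 := mul_nonneg (mul_nonneg (by norm_num) (pow_nonneg hA.le 6)) (pow_nonneg hB.le 3)
  have tC7 : (0:ℝ) ≤ (4124481807253658304/25)*(x-23/8)^7*(47/16-x)^2 := mul_nonneg (mul_nonneg (by norm_num) (pow_nonneg hA.le 7)) (pow_nonneg hB.le 2)
  have tC8 : (0:ℝ) ≤ (5344489704188702091/125)*(x-23/8)^8*(47/16-x) := mul_nonneg (mul_nonneg (by norm_num) (pow_nonneg hA.le 8)) (hB.le)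
  have tC9 : (0:ℝ) ≤ (3077123487195680091/625)*(x-23/8)^9 := mul_nonneg (by norm_num) (pow_nonneg hA.le 9)
  rw [hq]
  linarith [hid, hprod, tC0, tC1, tC2, tC3, tC4, tC5, tC6, tC7, tC8, tC9]

lemma hdQ (x : ℝ) : HasDerivAt Qf
    (20*x^9 - 9*(2+Real.sqrt 3)*x^8 - 8*(2*Real.sqrt 3-2)*x^7 - 7*(2*Real.sqrt 3-2)*x^6
      - 6*(12*Real.sqrt 3+2)*x^5 - 5*(13*Real.sqrt 3-4)*x^4 - 4*(12*Real.sqrt 3+2)*x^3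
      - 3*(2*Real.sqrt 3-2)*x^2 - 2*(2*Real.sqrt 3-2)*x - (2+Real.sqrt 3)) x := by
  have H := (((((((((((hasDerivAt_pow 10 x).const_mul (2:ℝ)).sub
    ((hasDerivAt_pow 9 x).const_mul (2+Real.sqrt 3))).sub
    ((hasDerivAt_pow 8 x).const_mul (2*Real.sqrt 3-2))).sub
    ((hasDerivAt_pow 7 x).const_mul (2*Real.sqrt 3-2))).sub
    ((hasDerivAt_pow 6 x).const_mul (12*Real.sqrt 3+2))).sub
    ((hasDerivAt_pow 5 x).const_mul (13*Real.sqrt 3-4))).sub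
    ((hasDerivAt_pow 4 x).const_mul (12*Real.sqrt 3+2))).sub
    ((hasDerivAt_pow 3 x).const_mul (2*Real.sqrt 3-2))).sub
    ((hasDerivAt_pow 2 x).const_mul (2*Real.sqrt 3-2))).sub
    ((hasDerivAt_id x).const_mul (2+Real.sqrt 3))).add_const (2:ℝ)
  refine H.congr_deriv (f := Qf) ?_
  push_cast
  ring

lemma Qcont : Continuous Qf := by
  unfold Qf; fun_prop

lemma Qmono : StrictMonoOn Qf (Set.Icc (23/8) (47/16)) := by
  apply strictMonoOn_of_deriv_pos (convex_Icc _ _) Qcont.continuousOn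
  intro x hx
  rw [interior_Icc, Set.mem_Ioo] at hx
  rw [(hdQ x).deriv]
  exact lemC x (by linarith [hx.1]) hx.2

theorem stmt_7 :
    (let q : ℝ → ℝ := fun a =>
      2*a^10 - (2 + Real.sqrt 3)*a^9 - (2*Real.sqrt 3 - 2)*a^8 - (2*Real.sqrt 3 - 2)*a^7
        - (12*Real.sqrt 3 + 2)*a^6 - (13*Real.sqrt 3 - 4)*a^5 - (12*Real.sqrt 3 + 2)*a^4
        - (2*Real.sqrt 3 - 2)*a^3 - (2*Real.sqrt 3 - 2)*a^2 - (2 + Real.sqrt 3)*a + 2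
     ∃! u : ℝ, 1 ≤ u ∧ q u = 0) ∧
    (∀ u : ℝ, 1 ≤ u →
      (2*u^10 - (2 + Real.sqrt 3)*u^9 - (2*Real.sqrt 3 - 2)*u^8 - (2*Real.sqrt 3 - 2)*u^7
        - (12*Real.sqrt 3 + 2)*u^6 - (13*Real.sqrt 3 - 4)*u^5 - (12*Real.sqrt 3 + 2)*u^4
        - (2*Real.sqrt 3 - 2)*u^3 - (2*Real.sqrt 3 - 2)*u^2 - (2 + Real.sqrt 3)*u + 2) = 0 →
      46/16 < u ∧ u < 47/16) := by
  have locate : ∀ u : ℝ, 1 ≤ u → Qf u = 0 → 23/8 < u ∧ u < 47/16 := by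
    intro u hu h0
    constructor
    · by_contra h; push_neg at h
      have := lemA u hu h; linarith [this, h0.ge, h0.le]
    · by_contra h; push_neg at h
      have := lemB u h; linarith [this, h0.ge, h0.le]
  constructor
  · show ∃! u : ℝ, 1 ≤ u ∧ Qf u = 0
    have hlt : Qf (23/8) < 0 := lemA (23/8) (by norm_num) (by norm_num)
    have hgt : 0 < Qf (47/16) := lemB (47/16) (by norm_num)
    have hsub := intermediate_value_Ioo (by norm_num : (23:ℝ)/8 ≤ 47/16) Qcont.continuousOn
    obtain ⟨c, hcmem, hc0⟩ := hsub (Set.mem_Ioo.mpr ⟨hlt, hgt⟩)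
    rw [Set.mem_Ioo] at hcmem
    refine ⟨c, ⟨by linarith [hcmem.1], hc0⟩, ?_⟩
    rintro v ⟨hv1, hv0⟩
    have hvloc := locate v hv1 hv0
    exact Qmono.injOn (Set.mem_Icc.mpr ⟨hvloc.1.le, hvloc.2.le⟩)
      (Set.mem_Icc.mpr ⟨hcmem.1.le, hcmem.2.le⟩) (by rw [hv0, hc0])
  · intro u hu h0
    have := locate u hu h0
    exact ⟨by linarith [this.1], this.2⟩
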